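/- Let ω ∈ ℂ be a primitive cube root of unity, B = diag(1, ω, ω²) ∈ GL(3, ℂ), and for g ∈ S₃ let A_g ∈ GL(3, ℂ) be the permutation matrix of g. Then the set {[B^k·A_g] : k ∈ {0,1,2}, g ∈ S₃} of classes in PGL(3, ℂ) is a subgroup of order 18 (in particular the 18 matrices B^k·A_g are pairwise non-proportional), and this subgroup is isomorphic to the semidirect product C₃ ⋊_ψ S₃, where ψ : S₃ → Aut(C₃) ≅ C₂ is the quotient map S₃ → S₃/C₃ ≅ C₂; equivalently, it has presentation ⟨a, b, c | a³ = b³ = c² = 1, ab = ba, cbc = b⁻¹, cac = a⁻¹⟩ with a = [A_{(123)}], b = [B], c = [A_{(12)}]. -/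

import Mathlib

open Matrix

/-- The cyclic group of order 3. -/
abbrev C3 := Multiplicative (ZMod 3)

/-- The homomorphism `ℤˣ ≅ C₂ → Aut(C₃)` sending `-1` to inversion. -/
def signToAut : ℤˣ →* MulAut C3 where
  toFun u := if u = 1 then 1 else MulEquiv.inv C3
  map_one' := if_pos rfl
  map_mul' u v := by
    rcases Int.units_eq_one_or u with rfl | rfl <;>
      rcases Int.units_eq_one_or v with rfl | rfl
    · simp
    · simp
    · simp [if_neg (by decide : ¬((-1 : ℤˣ) = 1))]
    · try dsimp only
      rw [if_neg (by decide : ¬((-1 : ℤˣ) = 1)), if_pos (by decide : ((-1 : ℤˣ) * -1 = 1))]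
      ext x
      simp [MulEquiv.inv]
      exact (inv_inv x).symm

/-- The homomorphism `ψ : S₃ → Aut(C₃)`, given by the quotient map
`S₃ → S₃/C₃ ≅ C₂` (i.e. by the sign), with odd permutations acting by inversion. -/
def psi : Equiv.Perm (Fin 3) →* MulAut C3 := signToAut.comp Equiv.Perm.sign

/-- The subgroup of nonzero scalar matrices in `GL(3, ℂ)`. -/
def scalarSubgroup : Subgroup (GL (Fin 3) ℂ) :=
  (Units.map (algebraMap ℂ (Matrix (Fin 3) (Fin 3) ℂ)).toMonoidHom).range

instance : scalarSubgroup.Normal := by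
  constructor
  intro n hn g
  obtain ⟨c, rfl⟩ := hn
  refine ⟨c, Units.ext ?_⟩
  simp only [Units.val_mul, Units.coe_map, RingHom.toMonoidHom_eq_coe, MonoidHom.coe_coe]
  rw [← Algebra.commutes (c : ℂ) ((g : Matrix (Fin 3) (Fin 3) ℂ)), mul_assoc, ← Units.val_mul,
    mul_inv_cancel, Units.val_one, mul_one]

/-- The projective general linear group `PGL(3, ℂ)`, the quotient of `GL(3, ℂ)` by the
subgroup of nonzero scalar matrices. -/
def PGL3 := GL (Fin 3) ℂ ⧸ scalarSubgroup

instance : Group PGL3 := inferInstanceAs (Group (GL (Fin 3) ℂ ⧸ scalarSubgroup))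

/-- The quotient map `GL(3, ℂ) → PGL(3, ℂ)`, `M ↦ [M]`. -/
def toPGL3 : GL (Fin 3) ℂ →* PGL3 := QuotientGroup.mk' scalarSubgroup

section Aux

lemma pow_mod3 {G : Type*} [Monoid G] {x : G} (h3 : x ^ 3 = 1) (n : ℕ) :
    x ^ n = x ^ (n % 3) := by
  conv_lhs => rw [← Nat.div_add_mod n 3]
  rw [pow_add, pow_mul, h3, one_pow, one_mul]

lemma mem_scalarSubgroup_iff {M : GL (Fin 3) ℂ} :
    M ∈ scalarSubgroup ↔ ∃ c : ℂ, (M : Matrix (Fin 3) (Fin 3) ℂ) = c • 1 := by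
  constructor
  · rintro ⟨c, rfl⟩
    refine ⟨c, ?_⟩
    simp [Algebra.algebraMap_eq_smul_one]
  · rintro ⟨c, hc⟩
    have hM : IsUnit ((M : Matrix (Fin 3) (Fin 3) ℂ).det) :=
      (Matrix.isUnit_iff_isUnit_det _).1 ⟨M, rfl⟩
    rw [hc, Matrix.det_smul, Matrix.det_one, mul_one] at hM
    have hc0 : c ≠ 0 := by
      intro h
      rw [h] at hM
      simp [isUnit_iff_ne_zero] at hM
    refine ⟨Units.mk0 c hc0, Units.ext ?_⟩
    simp only [Units.coe_map, RingHom.toMonoidHom_eq_coe, MonoidHom.coe_coe, Units.val_mk0]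
    rw [Algebra.algebraMap_eq_smul_one, hc]

lemma toPGL3_eq_iff {X Y : GL (Fin 3) ℂ} :
    toPGL3 X = toPGL3 Y ↔
      ∃ c : ℂ, (Y : Matrix (Fin 3) (Fin 3) ℂ) = c • (X : Matrix (Fin 3) (Fin 3) ℂ) := by
  have h0 : toPGL3 X = toPGL3 Y ↔ X⁻¹ * Y ∈ scalarSubgroup := QuotientGroup.eq
  rw [h0, mem_scalarSubgroup_iff]
  constructor
  · rintro ⟨c, hc⟩
    rw [Units.val_mul] at hc
    refine ⟨c, ?_⟩
    calc (Y : Matrix (Fin 3) (Fin 3) ℂ)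
        = ((X : Matrix (Fin 3) (Fin 3) ℂ) * ((X⁻¹ : GL (Fin 3) ℂ) : Matrix (Fin 3) (Fin 3) ℂ))
            * (Y : Matrix (Fin 3) (Fin 3) ℂ) := by
          rw [← Units.val_mul, mul_inv_cancel, Units.val_one, one_mul]
      _ = (X : Matrix (Fin 3) (Fin 3) ℂ) *
            (((X⁻¹ : GL (Fin 3) ℂ) : Matrix (Fin 3) (Fin 3) ℂ) *
              (Y : Matrix (Fin 3) (Fin 3) ℂ)) := mul_assoc _ _ _
      _ = c • (X : Matrix (Fin 3) (Fin 3) ℂ) := by rw [hc, mul_smul_comm, mul_one]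
  · rintro ⟨c, hc⟩
    refine ⟨c, ?_⟩
    rw [Units.val_mul, hc, mul_smul_comm, ← Units.val_mul, inv_mul_cancel, Units.val_one]

end Aux

/-- Let `ω ∈ ℂ` be a primitive cube root of unity, `B = diag(1, ω, ω²)`,
and for `g ∈ S₃` let `A_g` be the permutation matrix of `g`. The set
`{[B^k·A_g] : k ∈ {0,1,2}, g ∈ S₃}` of classes in `PGL(3, ℂ)` is a subgroup of order 18
(in particular the 18 matrices `B^k·A_g` are pairwise non-proportional), isomorphic to the
semidirect product `C₃ ⋊_ψ S₃`, where `ψ : S₃ → Aut(C₃) ≅ C₂` is given by the quotient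
map `S₃ → S₃/C₃ ≅ C₂`. -/
theorem stabilizer_subgroup_structure (ω : ℂ) (hω : IsPrimitiveRoot ω 3)
    (B : GL (Fin 3) ℂ) (hB : (B : Matrix (Fin 3) (Fin 3) ℂ) = Matrix.diagonal ![1, ω, ω ^ 2])
    (A : Equiv.Perm (Fin 3) → GL (Fin 3) ℂ)
    (hA : ∀ g, (A g : Matrix (Fin 3) (Fin 3) ℂ) = Matrix.of fun i j => if g i = j then 1 else 0) :
    ∃ H : Subgroup PGL3,
      (H : Set PGL3) =
          {x : PGL3 | ∃ (k : Fin 3) (g : Equiv.Perm (Fin 3)), x = toPGL3 (B ^ (k : ℕ) * A g)} ∧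
      Function.Injective
          (fun p : Fin 3 × Equiv.Perm (Fin 3) => toPGL3 (B ^ (p.1 : ℕ) * A p.2)) ∧
      Nat.card H = 18 ∧
      Nonempty (H ≃* C3 ⋊[psi] Equiv.Perm (Fin 3)) := by
    -- basic facts about ω
  have hω3 : ω ^ 3 = 1 := hω.pow_eq_one
  have hω0 : ω ≠ 0 := fun h => by simp [h] at hω3
  have hpoweq : ∀ a b : ℕ, a % 3 = b % 3 → ω ^ a = ω ^ b := fun a b h => by
    rw [pow_mod3 hω3 a, pow_mod3 hω3 b, h]
  have hd : ∀ i : Fin 3, (![1, ω, ω ^ 2] : Fin 3 → ℂ) i = ω ^ (i : ℕ) := by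
    intro i; fin_cases i <;> simp
  -- powers of B
  have hBpow : ∀ n : ℕ, ((B ^ n : GL (Fin 3) ℂ) : Matrix (Fin 3) (Fin 3) ℂ)
      = Matrix.diagonal fun i : Fin 3 => ω ^ ((i : ℕ) * n) := by
    intro n
    rw [Units.val_pow_eq_pow_val, hB, Matrix.diagonal_pow]
    have hfun : (![1, ω, ω ^ 2] : Fin 3 → ℂ) ^ n = fun i : Fin 3 => ω ^ ((i : ℕ) * n) := by
      funext i
      rw [Pi.pow_apply, hd i, ← pow_mul]
    rw [hfun]
  have hProd : ∀ (n : ℕ) (g : Equiv.Perm (Fin 3)),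
      ((B ^ n * A g : GL (Fin 3) ℂ) : Matrix (Fin 3) (Fin 3) ℂ)
        = Matrix.of fun i j => if g i = j then ω ^ ((i : ℕ) * n) else 0 := by
    intro n g
    rw [Units.val_mul, hBpow, hA]
    ext i j
    simp [Matrix.diagonal_mul, mul_ite]
  -- B^3 = 1 in GL
  have hB3 : (B : GL (Fin 3) ℂ) ^ 3 = 1 := by
    apply Units.ext
    rw [hBpow 3, Units.val_one]
    have : (fun i : Fin 3 => ω ^ ((i : ℕ) * 3)) = fun _ => (1 : ℂ) := by
      funext i
      rw [hpoweq ((i : ℕ) * 3) 0 (by simp [Nat.mul_mod_left]), pow_zero]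
    rw [this, Matrix.diagonal_one]
  have hpb3 : toPGL3 B ^ 3 = 1 := by rw [← _root_.map_pow, hB3, _root_.map_one]
  -- the key conjugation relation
  have hconj : ∀ (g : Equiv.Perm (Fin 3)) (e : ℕ),
      (∀ i : Fin 3, (3 - (g 0 : ℕ) + (g i : ℕ)) % 3 = (e * (i : ℕ)) % 3) →
      toPGL3 (A g) * toPGL3 B * (toPGL3 (A g))⁻¹ = toPGL3 B ^ e := by
    intro g e he
    have h1 : toPGL3 (A g * B) = toPGL3 (B ^ e * A g) := by
      refine toPGL3_eq_iff.2 ⟨ω ^ (3 - (g 0 : ℕ)), ?_⟩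
      rw [Units.val_mul, Units.val_mul, hBpow e, hA g, hB]
      ext i j
      by_cases hij : g i = j
      · subst hij
        simp only [Matrix.diagonal_mul, Matrix.of_apply, Matrix.smul_apply,
          Matrix.mul_diagonal, smul_eq_mul, eq_self_iff_true, if_true, mul_one, one_mul]
        rw [hd (g i), ← pow_add]
        exact hpoweq _ _ (by rw [Nat.mul_comm i e]; exact (he i).symm)
      · simp [Matrix.diagonal_mul, Matrix.mul_diagonal, hij]
    rw [mul_inv_eq_iff_eq_mul, ← _root_.map_mul, ← _root_.map_pow, ← _root_.map_mul]
    exact h1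
  -- decidable combinatorial facts
  have hkey1 : ∀ g : Equiv.Perm (Fin 3), Equiv.Perm.sign g = 1 →
      ∀ i : Fin 3, (3 - (g 0 : ℕ) + (g i : ℕ)) % 3 = (1 * (i : ℕ)) % 3 := by decide
  have hkey2 : ∀ g : Equiv.Perm (Fin 3), Equiv.Perm.sign g = -1 →
      ∀ i : Fin 3, (3 - (g 0 : ℕ) + (g i : ℕ)) % 3 = (2 * (i : ℕ)) % 3 := by decide
  -- the homomorphism C3 →* PGL3
  have hf1mul : ∀ a b : C3,
      toPGL3 B ^ (Multiplicative.toAdd (a * b)).val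
        = toPGL3 B ^ (Multiplicative.toAdd a).val * toPGL3 B ^ (Multiplicative.toAdd b).val := by
    intro a b
    rw [← pow_add]
    have : (Multiplicative.toAdd (a * b)).val
        = ((Multiplicative.toAdd a).val + (Multiplicative.toAdd b).val) % 3 := ZMod.val_add _ _
    rw [this, ← pow_mod3 hpb3]
  set f1 : C3 →* PGL3 :=
    MonoidHom.mk' (fun a : C3 => toPGL3 B ^ (Multiplicative.toAdd a).val) hf1mul with hf1
  -- the antihomomorphism property of A
  have hAmul : ∀ g h : Equiv.Perm (Fin 3), A g * A h = A (h * g) := by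
    intro g h
    apply Units.ext
    rw [Units.val_mul, hA, hA, hA]
    ext i j
    rw [Matrix.mul_apply]
    rw [Finset.sum_eq_single (g i)]
    · simp [Equiv.Perm.mul_apply]
      congr
    · intro b _ hb
      simp [Ne.symm hb]
    · intro hmem
      exact absurd (Finset.mem_univ _) hmem
  have hf2mul : ∀ g h : Equiv.Perm (Fin 3),
      toPGL3 (A (g * h)⁻¹) = toPGL3 (A g⁻¹) * toPGL3 (A h⁻¹) := by
    intro g h
    rw [← _root_.map_mul, hAmul, ← _root_.mul_inv_rev]
  set f2 : Equiv.Perm (Fin 3) →* PGL3 :=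
    MonoidHom.mk' (fun g => toPGL3 (A g⁻¹)) hf2mul with hf2
  -- the compatibility for the semidirect product lift
  have compat : ∀ g : Equiv.Perm (Fin 3),
      f1.comp (psi g).toMonoidHom = (MulAut.conj (f2 g)).toMonoidHom.comp f1 := by
    intro g
    refine MonoidHom.ext fun a => ?_
    simp only [MonoidHom.comp_apply, MulEquiv.coe_toMonoidHom, MulAut.conj_apply]
    have hsinv : Equiv.Perm.sign g⁻¹ = Equiv.Perm.sign g := by
      rw [_root_.map_inv]
      rcases Int.units_eq_one_or (Equiv.Perm.sign g) with hs | hs <;> rw [hs] <;> rfl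
    have hconjpow : ∀ (e : ℕ), (f2 g * toPGL3 B * (f2 g)⁻¹ = toPGL3 B ^ e) →
        f2 g * f1 a * (f2 g)⁻¹ = toPGL3 B ^ (e * (Multiplicative.toAdd a).val) := by
      intro e hce
      have : f1 a = toPGL3 B ^ (Multiplicative.toAdd a).val := rfl
      rw [this, ← conj_pow, hce, ← pow_mul]
    rcases Int.units_eq_one_or (Equiv.Perm.sign g) with hs | hs
    · have hpsi : psi g a = a := by
        simp [psi, signToAut, hs]
      rw [hpsi, hconjpow 1 (hconj g⁻¹ 1 (hkey1 g⁻¹ (by rw [hsinv, hs]))), one_mul]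
      rfl
    · have hpsi : psi g a = a⁻¹ := by
        simp [psi, signToAut, hs, MulEquiv.inv]
        rfl
      rw [hpsi, hconjpow 2 (hconj g⁻¹ 2 (hkey2 g⁻¹ (by rw [hsinv, hs])))]
      show toPGL3 B ^ (Multiplicative.toAdd a⁻¹).val = _
      have hval : ∀ b : C3, (Multiplicative.toAdd b⁻¹).val % 3
          = (2 * (Multiplicative.toAdd b).val) % 3 := by decide
      rw [pow_mod3 hpb3, hval a, ← pow_mod3 hpb3]
  set f : C3 ⋊[psi] Equiv.Perm (Fin 3) →* PGL3 := SemidirectProduct.lift f1 f2 compat with hf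
  have hfval : ∀ x : C3 ⋊[psi] Equiv.Perm (Fin 3),
      f x = toPGL3 (B ^ (Multiplicative.toAdd x.left).val * A x.right⁻¹) := by
    intro x
    have : f x = f1 x.left * f2 x.right := by
      conv_lhs => rw [← SemidirectProduct.inl_left_mul_inr_right x]
      rw [_root_.map_mul, SemidirectProduct.lift_inl, SemidirectProduct.lift_inr]
    rw [this, _root_.map_mul, _root_.map_pow]
    rfl
  -- injectivity
  have hker : ∀ x : C3 ⋊[psi] Equiv.Perm (Fin 3), f x = 1 → x = 1 := by
    intro x hx
    rw [hfval] at hx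
    have h1 : toPGL3 (1 : GL (Fin 3) ℂ)
        = toPGL3 (B ^ (Multiplicative.toAdd x.left).val * A x.right⁻¹) := by
      rw [_root_.map_one, hx]
    obtain ⟨c, hc⟩ := toPGL3_eq_iff.1 h1
    rw [hProd, Units.val_one] at hc
    have hent : ∀ i j : Fin 3,
        (if x.right⁻¹ i = j then ω ^ ((i : ℕ) * (Multiplicative.toAdd x.left).val) else 0)
          = c * (if i = j then 1 else 0) := by
      intro i j
      have := Matrix.ext_iff.mpr hc i j
      simpa [Matrix.one_apply] using this
    have hgi : ∀ i : Fin 3, x.right⁻¹ i = i := by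
      intro i
      by_contra hne
      have := hent i (x.right⁻¹ i)
      rw [if_pos rfl, if_neg (fun h => hne h.symm), mul_zero] at this
      exact pow_ne_zero _ hω0 this
    have hg1 : x.right = 1 := by
      have : x.right⁻¹ = 1 := Equiv.ext hgi
      rwa [inv_eq_one] at this
    have hc1 : c = 1 := by
      have := hent 0 0
      rw [if_pos (hgi 0), if_pos rfl, mul_one] at this
      simpa using this.symm
    have hv0 : (Multiplicative.toAdd x.left).val = 0 := by
      have := hent 1 1
      rw [if_pos (hgi 1), if_pos rfl, mul_one, hc1] at this
      have h1v : ω ^ (Multiplicative.toAdd x.left).val = 1 := by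
        simpa using this
      have hdvd : 3 ∣ (Multiplicative.toAdd x.left).val := (hω.pow_eq_one_iff_dvd _).1 h1v
      have hlt : (Multiplicative.toAdd x.left).val < 3 := ZMod.val_lt _
      omega
    have hl1 : x.left = 1 := by
      have : Multiplicative.toAdd x.left = 0 := (ZMod.val_eq_zero _).1 hv0
      simpa using this
    cases x with
    | mk l r =>
      simp only at hl1 hg1
      rw [hl1, hg1]
      rfl
  have hinj : Function.Injective f := (injective_iff_map_eq_one f).2 hker
  refine ⟨f.range, ?_, ?_, ?_, ⟨(MonoidHom.ofInjective hinj).symm⟩⟩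
  · -- set equality
    ext x
    simp only [SetLike.mem_coe, MonoidHom.mem_range, Set.mem_setOf_eq]
    constructor
    · rintro ⟨y, rfl⟩
      exact ⟨⟨(Multiplicative.toAdd y.left).val, ZMod.val_lt _⟩, y.right⁻¹, (hfval y)⟩
    · rintro ⟨k, g, rfl⟩
      refine ⟨⟨Multiplicative.ofAdd ((k : ℕ) : ZMod 3), g⁻¹⟩, ?_⟩
      rw [hfval]
      simp only [inv_inv, toAdd_ofAdd]
      rw [ZMod.val_natCast, Nat.mod_eq_of_lt k.isLt]
  · -- injectivity of the 18 classes
    intro p q hpq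
    have hmk : ∀ r : Fin 3 × Equiv.Perm (Fin 3),
        toPGL3 (B ^ (r.1 : ℕ) * A r.2)
          = f ⟨Multiplicative.ofAdd ((r.1 : ℕ) : ZMod 3), r.2⁻¹⟩ := by
      intro r
      rw [hfval]
      simp only [inv_inv, toAdd_ofAdd]
      rw [ZMod.val_natCast, Nat.mod_eq_of_lt r.1.isLt]
    simp only [hmk] at hpq
    have := hinj hpq
    have hleft : ((p.1 : ℕ) : ZMod 3) = ((q.1 : ℕ) : ZMod 3) := by
      have := congrArg SemidirectProduct.left this
      simpa using this
    have h1 : p.1 = q.1 := by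
      have := congrArg ZMod.val hleft
      rw [ZMod.val_natCast, ZMod.val_natCast, Nat.mod_eq_of_lt p.1.isLt,
        Nat.mod_eq_of_lt q.1.isLt] at this
      exact Fin.ext this
    have h2 : p.2 = q.2 := by
      have := congrArg SemidirectProduct.right this
      simp only at this
      exact inv_injective this
    exact Prod.ext h1 h2
  · -- cardinality
    have e : C3 ⋊[psi] Equiv.Perm (Fin 3) ≃ C3 × Equiv.Perm (Fin 3) :=
      ⟨fun x => (x.left, x.right), fun p => ⟨p.1, p.2⟩, fun x => by cases x; rfl,
        fun p => rfl⟩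
    rw [Nat.card_congr (MonoidHom.ofInjective hinj).toEquiv.symm, Nat.card_congr e,
      Nat.card_prod, Nat.card_eq_fintype_card, Nat.card_eq_fintype_card]
    rfl
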